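/- Let Γ_1, Γ_2 be graphs with minimum degrees δ_1, δ_2 and maximum degrees Δ_1, Δ_2. If S_1 × S_2 is an offensive k-alliance in the Cartesian product Γ_1 × Γ_2 (with S_1 ⊊ V_1, S_2 ⊊ V_2 nonempty), then S_1 is an offensive (k+δ_2)-alliance in Γ_1 and S_2 is an offensive (k+δ_1)-alliance in Γ_2. -/

import Mathlib

open Finset

variable {V V₁ V₂ : Type*}

/-- Number of neighbors of `v` lying in `S`. -/
def degOn [Fintype V] [DecidableEq V] (G : SimpleGraph V) [DecidableRel G.Adj]
    (S : Finset V) (v : V) : ℕ :=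
  (G.neighborFinset v ∩ S).card

/-- `S` is a dominating set of `G`. -/
def IsDominating [Fintype V] (G : SimpleGraph V) (S : Finset V) : Prop :=
  ∀ v ∉ S, ∃ u ∈ S, G.Adj u v

/-- `S` is a global offensive `k`-alliance in `G`. -/
def IsGOA [Fintype V] [DecidableEq V] (G : SimpleGraph V) [DecidableRel G.Adj]
    (k : ℤ) (S : Finset V) : Prop :=
  IsDominating G S ∧ ∀ v ∉ S, (degOn G Sᶜ v : ℤ) + k ≤ (degOn G S v : ℤ)

/-- `S` is an offensive `k`-alliance in `G`: it is nonempty and every boundary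
vertex has at least `k` more neighbors inside `S` than outside. -/
def IsOA [Fintype V] [DecidableEq V] (G : SimpleGraph V) [DecidableRel G.Adj]
    (k : ℤ) (S : Finset V) : Prop :=
  S.Nonempty ∧ ∀ v ∉ S, (∃ u ∈ S, G.Adj u v) →
    (degOn G Sᶜ v : ℤ) + k ≤ (degOn G S v : ℤ)

/-- `S` is an `r`-dependent set in `G`. -/
def IsDependent [Fintype V] [DecidableEq V] (G : SimpleGraph V) [DecidableRel G.Adj]
    (r : ℕ) (S : Finset V) : Prop :=
  ∀ v ∈ S, degOn G S v ≤ r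

/-- `S` is a `τ`-dominating set in `G`. -/
def IsTauDominating [Fintype V] [DecidableEq V] (G : SimpleGraph V) [DecidableRel G.Adj]
    (τ : ℝ) (S : Finset V) : Prop :=
  ∀ v ∉ S, τ * (G.degree v : ℝ) ≤ (degOn G S v : ℝ)

/-- The global offensive `k`-alliance number of `G`. -/
noncomputable def goaNum [Fintype V] [DecidableEq V] (G : SimpleGraph V)
    [DecidableRel G.Adj] (k : ℤ) : ℕ :=
  sInf {t | ∃ S : Finset V, IsGOA G k S ∧ S.card = t}

/-- The maximum cardinality of an `r`-dependent set in `G`. -/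
noncomputable def depNum [Fintype V] [DecidableEq V] (G : SimpleGraph V)
    [DecidableRel G.Adj] (r : ℕ) : ℕ :=
  sSup {t | ∃ S : Finset V, IsDependent G r S ∧ S.card = t}

lemma degOn_compl_add [Fintype V] [DecidableEq V] (G : SimpleGraph V) [DecidableRel G.Adj]
    (S : Finset V) (v : V) : degOn G Sᶜ v + degOn G S v = G.degree v := by
  have : G.neighborFinset v ∩ Sᶜ = G.neighborFinset v \ S := by
    ext x; simp
  rw [degOn, degOn, this, Finset.card_sdiff_add_card_inter, ← SimpleGraph.degree]

lemma degOn_boxProd_left [Fintype V₁] [DecidableEq V₁] [Fintype V₂] [DecidableEq V₂]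
    (G₁ : SimpleGraph V₁) (G₂ : SimpleGraph V₂)
    [DecidableRel G₁.Adj] [DecidableRel G₂.Adj] [DecidableRel (G₁ □ G₂).Adj]
    (S₁ : Finset V₁) (S₂ : Finset V₂) (v₁ : V₁) (v₂ : V₂)
    (hv₁ : v₁ ∉ S₁) (hv₂ : v₂ ∈ S₂) :
    degOn (G₁ □ G₂) (S₁ ×ˢ S₂) (v₁, v₂) = degOn G₁ S₁ v₁ := by
  rw [degOn, degOn, SimpleGraph.neighborFinset_boxProd]
  have : ((G₁.neighborFinset v₁ ×ˢ {v₂}).disjUnion ({v₁} ×ˢ G₂.neighborFinset v₂)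
      (Finset.disjoint_product.mpr <| Or.inl <|
        SimpleGraph.neighborFinset_disjoint_singleton _ _)) ∩ (S₁ ×ˢ S₂)
      = (G₁.neighborFinset v₁ ∩ S₁) ×ˢ {v₂} := by
    ext ⟨x, y⟩
    simp only [Finset.disjUnion_eq_union, Finset.mem_inter, Finset.mem_union,
      Finset.mem_product, Finset.mem_singleton, SimpleGraph.mem_neighborFinset]
    constructor
    · rintro ⟨⟨hx, hy⟩ | ⟨hx, hy⟩, hS₁, hS₂⟩
      · exact ⟨⟨hx, hS₁⟩, hy⟩
      · exact absurd (hx ▸ hS₁) hv₁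
    · rintro ⟨⟨hx, hS₁⟩, hy⟩
      exact ⟨Or.inl ⟨hx, hy⟩, hS₁, hy ▸ hv₂⟩
  rw [this, Finset.card_product, Finset.card_singleton, mul_one]

lemma degOn_boxProd_right [Fintype V₁] [DecidableEq V₁] [Fintype V₂] [DecidableEq V₂]
    (G₁ : SimpleGraph V₁) (G₂ : SimpleGraph V₂)
    [DecidableRel G₁.Adj] [DecidableRel G₂.Adj] [DecidableRel (G₁ □ G₂).Adj]
    (S₁ : Finset V₁) (S₂ : Finset V₂) (v₁ : V₁) (v₂ : V₂)
    (hv₁ : v₁ ∈ S₁) (hv₂ : v₂ ∉ S₂) :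
    degOn (G₁ □ G₂) (S₁ ×ˢ S₂) (v₁, v₂) = degOn G₂ S₂ v₂ := by
  rw [degOn, degOn, SimpleGraph.neighborFinset_boxProd]
  have : ((G₁.neighborFinset v₁ ×ˢ {v₂}).disjUnion ({v₁} ×ˢ G₂.neighborFinset v₂)
      (Finset.disjoint_product.mpr <| Or.inl <|
        SimpleGraph.neighborFinset_disjoint_singleton _ _)) ∩ (S₁ ×ˢ S₂)
      = {v₁} ×ˢ (G₂.neighborFinset v₂ ∩ S₂) := by
    ext ⟨x, y⟩
    simp only [Finset.disjUnion_eq_union, Finset.mem_inter, Finset.mem_union,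
      Finset.mem_product, Finset.mem_singleton, SimpleGraph.mem_neighborFinset]
    constructor
    · rintro ⟨⟨hx, hy⟩ | ⟨hx, hy⟩, hS₁, hS₂⟩
      · exact absurd (hy ▸ hS₂) hv₂
      · exact ⟨hx, hy, hS₂⟩
    · rintro ⟨hx, hy, hS₂⟩
      exact ⟨Or.inr ⟨hx, hy⟩, hx ▸ hv₁, hS₂⟩
  rw [this, Finset.card_product, Finset.card_singleton, one_mul]

theorem stmt_15 [Fintype V₁] [DecidableEq V₁] [Fintype V₂] [DecidableEq V₂]
    (G₁ : SimpleGraph V₁) (G₂ : SimpleGraph V₂)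
    [DecidableRel G₁.Adj] [DecidableRel G₂.Adj] [DecidableRel (G₁ □ G₂).Adj]
    (k : ℤ) (S₁ : Finset V₁) (S₂ : Finset V₂)
    (h₁ : S₁.Nonempty) (h₂ : S₂.Nonempty) (h₁' : S₁ ≠ Finset.univ)
    (h₂' : S₂ ≠ Finset.univ)
    (h : IsOA (G₁ □ G₂) k (S₁ ×ˢ S₂)) :
    IsOA G₁ (k + (G₂.minDegree : ℤ)) S₁ ∧ IsOA G₂ (k + (G₁.minDegree : ℤ)) S₂ := by
  obtain ⟨-, hOA⟩ := h
  constructor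
  · refine ⟨h₁, fun v₁ hv₁ ⟨u₁, hu₁, hadj⟩ => ?_⟩
    obtain ⟨v₂, hv₂⟩ := h₂
    have hmem : (v₁, v₂) ∉ S₁ ×ˢ S₂ := by simp [hv₁]
    have hbd : ∃ u ∈ S₁ ×ˢ S₂, (G₁ □ G₂).Adj u (v₁, v₂) := by
      exact ⟨(u₁, v₂), by simp [hu₁, hv₂], Or.inl ⟨hadj, rfl⟩⟩
    have key := hOA (v₁, v₂) hmem hbd
    have e1 : degOn (G₁ □ G₂) (S₁ ×ˢ S₂) (v₁, v₂) = degOn G₁ S₁ v₁ :=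
      degOn_boxProd_left G₁ G₂ S₁ S₂ v₁ v₂ hv₁ hv₂
    have e2 := degOn_compl_add (G₁ □ G₂) (S₁ ×ˢ S₂) (v₁, v₂)
    have e3 := degOn_compl_add G₁ S₁ v₁
    have e4 : @SimpleGraph.degree _ (G₁ □ G₂) (v₁, v₂) (SimpleGraph.neighborSetFintype _ _)
        = G₁.degree v₁ + G₂.degree v₂ := by
      convert SimpleGraph.degree_boxProd (v₁, v₂) using 2
    have e5 : G₂.minDegree ≤ G₂.degree v₂ := G₂.minDegree_le_degree v₂
    rw [e1] at key
    omega
  · refine ⟨h₂, fun v₂ hv₂ ⟨u₂, hu₂, hadj⟩ => ?_⟩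
    obtain ⟨v₁, hv₁⟩ := h₁
    have hmem : (v₁, v₂) ∉ S₁ ×ˢ S₂ := by simp [hv₂]
    have hbd : ∃ u ∈ S₁ ×ˢ S₂, (G₁ □ G₂).Adj u (v₁, v₂) := by
      exact ⟨(v₁, u₂), by simp [hu₂, hv₁], Or.inr ⟨hadj, rfl⟩⟩
    have key := hOA (v₁, v₂) hmem hbd
    have e1 : degOn (G₁ □ G₂) (S₁ ×ˢ S₂) (v₁, v₂) = degOn G₂ S₂ v₂ :=
      degOn_boxProd_right G₁ G₂ S₁ S₂ v₁ v₂ hv₁ hv₂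
    have e2 := degOn_compl_add (G₁ □ G₂) (S₁ ×ˢ S₂) (v₁, v₂)
    have e3 := degOn_compl_add G₂ S₂ v₂
    have e4 : @SimpleGraph.degree _ (G₁ □ G₂) (v₁, v₂) (SimpleGraph.neighborSetFintype _ _)
        = G₁.degree v₁ + G₂.degree v₂ := by
      convert SimpleGraph.degree_boxProd (v₁, v₂) using 2
    have e5 : G₁.minDegree ≤ G₁.degree v₁ := G₁.minDegree_le_degree v₁
    rw [e1] at key
    omega
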